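/- arXiv:2408.02108 — 4 statements merged into one kernel-verified Lean document; each statement's English description precedes it below -/
import Mathlib

section
/- Let a ≥ 0, b > 0, and R : ℝ≥0 → ℝ satisfy R(t) = a·t + b·t³ + O(t⁴) as t → 0⁺ (i.e., there exist c, t_c > 0 with |R(t) − a·t − b·t³| ≤ c·t⁴ for 0 ≤ t ≤ t_c). Define I(x) = sup_{t ≥ 0} (x·t − R(t)). Then for x ≥ a with x − a sufficiently small, I(x) ≥ (2/√(27b))·(x−a)^{3/2} − (c/(3b)²)·(x−a)². -/
open scoped Real

theorem legendre_boundary_three_half (a b c tc : ℝ) (ha : 0 ≤ a) (hb : 0 < b)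
    (hc : 0 < c) (htc : 0 < tc) (R : ℝ → ℝ)
    (hR : ∀ t : ℝ, 0 ≤ t → t ≤ tc → |R t - (a * t + b * t ^ 3)| ≤ c * t ^ 4)
    (I : ℝ → EReal)
    (hI : ∀ x : ℝ, I x = ⨆ t : {t : ℝ // 0 ≤ t}, ((x * t - R t : ℝ) : EReal)) :
    ∃ δ > 0, ∀ x : ℝ, a ≤ x → x - a ≤ δ →
      ((2 / Real.sqrt (27 * b) * (x - a) ^ ((3 : ℝ) / 2)
        - c / (3 * b) ^ 2 * (x - a) ^ 2 : ℝ) : EReal) ≤ I x := by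
  refine ⟨3 * b * tc ^ 2, by positivity, fun x hxa hxd => ?_⟩
  set s := x - a with hs_def
  have hs : 0 ≤ s := by simp [hs_def]; linarith
  have h3b : (0:ℝ) < 3 * b := by linarith
  set t := Real.sqrt (s / (3 * b)) with ht_def
  have ht0 : 0 ≤ t := Real.sqrt_nonneg _
  have ht2 : t ^ 2 = s / (3 * b) := Real.sq_sqrt (by positivity)
  have htc' : t ≤ tc := by
    have : t ≤ Real.sqrt (tc ^ 2) := by
      apply Real.sqrt_le_sqrt
      rw [div_le_iff₀ h3b]
      linarith [hxd]
    rwa [Real.sqrt_sq htc.le] at this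
  have hRb := hR t ht0 htc'
  have hRle : R t ≤ a * t + b * t ^ 3 + c * t ^ 4 := by
    have := abs_le.mp hRb
    linarith [this.2]
  -- key algebraic facts
  have hsqrt3b : Real.sqrt (3 * b) ^ 2 = 3 * b := Real.sq_sqrt h3b.le
  have hsqrt3b_pos : 0 < Real.sqrt (3 * b) := Real.sqrt_pos.mpr h3b
  have h27 : Real.sqrt (27 * b) = 3 * Real.sqrt (3 * b) := by
    rw [show (27:ℝ) * b = 3 ^ 2 * (3 * b) by ring, Real.sqrt_mul (by norm_num),
      Real.sqrt_sq (by norm_num)]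
  have hsqrts : Real.sqrt s = Real.sqrt (3 * b) * t := by
    rw [ht_def, Real.sqrt_div hs (3 * b)]
    field_simp
  have hrpow : s ^ ((3:ℝ)/2) = s * Real.sqrt s := by
    rw [show ((3:ℝ)/2) = 1 + (1/2 : ℝ) by norm_num, Real.rpow_add' hs (by norm_num),
      Real.rpow_one, ← Real.sqrt_eq_rpow]
  have hst : s = 3 * b * t ^ 2 := by rw [ht2]; field_simp
  have key : 2 / Real.sqrt (27 * b) * s ^ ((3:ℝ)/2) - c / (3 * b) ^ 2 * s ^ 2
      ≤ x * t - R t := by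
    have hx : x = s + a := by rw [hs_def]; ring
    have hlhs : 2 / Real.sqrt (27 * b) * s ^ ((3:ℝ)/2) - c / (3 * b) ^ 2 * s ^ 2
        = 2 * b * t ^ 3 - c * t ^ 4 := by
      rw [hrpow, h27, hsqrts, hst]
      field_simp
    rw [hlhs, hx]
    nlinarith [hRle, hst]
  rw [hI]
  refine le_trans ?_ (le_iSup (fun u : {t : ℝ // 0 ≤ t} => ((x * u - R u : ℝ) : EReal)) ⟨t, ht0⟩)
  exact_mod_cast key
end

section
/- Let 0 < a < 1 and R(λ) = 2·arcsinh(a·sinh(|λ|/2)) for λ ∈ ℝ. Then for a < x < 1, the equation R'(λ) = x has the unique positive solution λ(x) = 2·log((√(x²−a²) + x·√(1−a²))/(a·√(1−x²))). -/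
set_option maxHeartbeats 1000000 in
theorem rate_deriv_unique_solution (a : ℝ) (ha : 0 < a) (ha1 : a < 1)
    (R : ℝ → ℝ) (hR : ∀ l : ℝ, R l = 2 * Real.arsinh (a * Real.sinh (|l| / 2)))
    (lam : ℝ → ℝ)
    (hlam : ∀ x : ℝ, lam x =
      2 * Real.log ((Real.sqrt (x ^ 2 - a ^ 2) + x * Real.sqrt (1 - a ^ 2)) /
        (a * Real.sqrt (1 - x ^ 2)))) :
    ∀ x : ℝ, a < x → x < 1 →
      0 < lam x ∧ deriv R (lam x) = x ∧
        ∀ l : ℝ, 0 < l → deriv R l = x → l = lam x := by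
  have hderiv : ∀ l : ℝ, 0 < l →
      deriv R l = a * Real.cosh (l / 2) / Real.sqrt (1 + (a * Real.sinh (l / 2)) ^ 2) := by
    intro l hl
    have heq : R =ᶠ[nhds l] fun t => 2 * Real.arsinh (a * Real.sinh (t / 2)) := by
      filter_upwards [Ioi_mem_nhds hl] with t ht
      rw [hR t, abs_of_pos ht]
    rw [heq.deriv_eq]
    have h1 : HasDerivAt (fun t : ℝ => t / 2) (1 / 2) l := (hasDerivAt_id l).div_const 2
    have h2 : HasDerivAt (fun t : ℝ => Real.sinh (t / 2)) (Real.cosh (l / 2) * (1 / 2)) l :=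
      by have := (Real.hasDerivAt_sinh (l / 2)).comp l h1; exact this
    have h3 : HasDerivAt (fun t : ℝ => a * Real.sinh (t / 2))
        (a * (Real.cosh (l / 2) * (1 / 2))) l := h2.const_mul a
    have h4 : HasDerivAt (fun t : ℝ => Real.arsinh (a * Real.sinh (t / 2)))
        ((Real.sqrt (1 + (a * Real.sinh (l / 2)) ^ 2))⁻¹ * (a * (Real.cosh (l / 2) * (1 / 2)))) l :=
      (Real.hasDerivAt_arsinh _).comp l h3
    have h5 := h4.const_mul 2
    rw [h5.deriv]
    have hs : 0 < Real.sqrt (1 + (a * Real.sinh (l / 2)) ^ 2) := by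
      apply Real.sqrt_pos.2; positivity
    field_simp
  intro x hax hx1
  have hx0 : 0 < x := ha.trans hax
  have h1a : 0 < 1 - a ^ 2 := by nlinarith
  have h1x : 0 < 1 - x ^ 2 := by nlinarith
  have hxa : 0 < x ^ 2 - a ^ 2 := by nlinarith
  set D : ℝ := a * Real.sqrt (1 - x ^ 2) with hD
  have hDpos : 0 < D := by positivity
  set C : ℝ := x * Real.sqrt (1 - a ^ 2) / D with hCdef
  set S : ℝ := Real.sqrt (x ^ 2 - a ^ 2) / D with hSdef
  have hSpos : 0 < S := div_pos (Real.sqrt_pos.2 hxa) hDpos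
  have hCpos : 0 < C := by
    apply div_pos _ hDpos
    positivity
  have hD2 : D ^ 2 = a ^ 2 * (1 - x ^ 2) := by
    rw [hD, mul_pow, Real.sq_sqrt h1x.le]
  have hC2 : C ^ 2 = x ^ 2 * (1 - a ^ 2) / (a ^ 2 * (1 - x ^ 2)) := by
    rw [hCdef, div_pow, mul_pow, Real.sq_sqrt h1a.le, hD2]
  have hS2 : S ^ 2 = (x ^ 2 - a ^ 2) / (a ^ 2 * (1 - x ^ 2)) := by
    rw [hSdef, div_pow, Real.sq_sqrt hxa.le, hD2]
  have hCS : C ^ 2 = S ^ 2 + 1 := by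
    rw [hC2, hS2]
    field_simp
    ring
  set E : ℝ := (Real.sqrt (x ^ 2 - a ^ 2) + x * Real.sqrt (1 - a ^ 2)) / D with hEdef
  have hE : E = S + C := by rw [hEdef, hSdef, hCdef, ← add_div]
  have hEpos : 0 < E := by rw [hE]; linarith
  have hE1 : 1 < E := by nlinarith [hCS, hSpos, hCpos, hE]
  have hlamx : lam x = 2 * Real.log E := by rw [hlam x, hEdef, hD]
  have hlogE : 0 < Real.log E := Real.log_pos hE1
  have hlampos : 0 < lam x := by rw [hlamx]; linarith
  have hmul : (C - S) * E = 1 := by rw [hE]; nlinarith [hCS]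
  have hEinv : E⁻¹ = C - S := (eq_inv_of_mul_eq_one_left hmul).symm
  have hhalf : lam x / 2 = Real.log E := by rw [hlamx]; ring
  have hcosh : Real.cosh (lam x / 2) = C := by
    rw [hhalf, Real.cosh_log hEpos, hEinv, hE]; ring
  have hsinh : Real.sinh (lam x / 2) = S := by
    rw [hhalf, Real.sinh_log hEpos, hEinv, hE]; ring
  have hone : 1 + (a * S) ^ 2 = (Real.sqrt (1 - a ^ 2) / Real.sqrt (1 - x ^ 2)) ^ 2 := by
    rw [mul_pow, hS2, div_pow, Real.sq_sqrt h1a.le, Real.sq_sqrt h1x.le]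
    field_simp
    ring
  have hsq : Real.sqrt (1 + (a * S) ^ 2) = Real.sqrt (1 - a ^ 2) / Real.sqrt (1 - x ^ 2) := by
    rw [hone, Real.sqrt_sq (by positivity)]
  have hsa : (0:ℝ) < Real.sqrt (1 - a ^ 2) := Real.sqrt_pos.2 h1a
  have hsx : (0:ℝ) < Real.sqrt (1 - x ^ 2) := Real.sqrt_pos.2 h1x
  have hval : deriv R (lam x) = x := by
    rw [hderiv _ hlampos, hcosh, hsinh, hsq, hCdef, hD]
    field_simp
  refine ⟨hlampos, hval, ?_⟩
  intro l hl hdl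
  rw [hderiv l hl] at hdl
  set s := Real.sinh (l / 2) with hs
  set c := Real.cosh (l / 2) with hc
  have hspos : 0 < s := Real.sinh_pos_iff.2 (by linarith)
  have hcpos : 0 < c := Real.cosh_pos (l / 2)
  have hqpos : 0 < Real.sqrt (1 + (a * s) ^ 2) := Real.sqrt_pos.2 (by positivity)
  have hac : a * c = x * Real.sqrt (1 + (a * s) ^ 2) := by
    rw [div_eq_iff hqpos.ne'] at hdl
    linarith [hdl]
  have hsq2 : (a * c) ^ 2 = x ^ 2 * (1 + (a * s) ^ 2) := by
    rw [hac, mul_pow, Real.sq_sqrt (by positivity)]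
  have hc2 : c ^ 2 = s ^ 2 + 1 := Real.cosh_sq (l / 2)
  have hkey : s ^ 2 * (a ^ 2 * (1 - x ^ 2)) = x ^ 2 - a ^ 2 := by linear_combination hsq2 - a ^ 2 * hc2
  have hs2eq : s ^ 2 = S ^ 2 := by
    rw [hS2, eq_div_iff (by positivity : (a ^ 2 * (1 - x ^ 2)) ≠ 0)]
    exact hkey
  have hsS : s = S := by
    have h0 : (s - S) * (s + S) = 0 := by linear_combination hs2eq
    rcases mul_eq_zero.1 h0 with h | h
    · linarith
    · linarith
  have hcC : c = C := by
    have h2 : c ^ 2 = C ^ 2 := by rw [hc2, hCS, hs2eq]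
    have h0 : (c - C) * (c + C) = 0 := by linear_combination h2
    rcases mul_eq_zero.1 h0 with h | h
    · linarith
    · linarith
  have hexp : Real.exp (l / 2) = E := by
    rw [← Real.cosh_add_sinh (l / 2), ← hs, ← hc, hsS, hcC, hE]; ring
  have : l / 2 = Real.log E := by
    have := Real.exp_log hEpos
    exact Real.exp_injective (by rw [hexp, this])
  rw [hlamx]
  linarith
end

section
/- For c₁, c₂, c₃ ∈ [0,1] with c₁c₂c₃ < 1, the quantity 1 − ((1−c₃)(1−c₁c₂) + c₃(1−c₁)(1−c₂))/(1−c₁c₂c₃) lies in [0,1], i.e. the squared group velocity |∇ω|² of ω(p) = arccos(cos p₁ cos p₂ cos p₃) is at most 1, with equality approached as c₁ = c₂ = c₃ → 1. -/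
theorem group_velocity_3d_bound :
    (∀ c₁ c₂ c₃ : ℝ, c₁ ∈ Set.Icc (0:ℝ) 1 → c₂ ∈ Set.Icc (0:ℝ) 1 → c₃ ∈ Set.Icc (0:ℝ) 1 →
      c₁ * c₂ * c₃ < 1 →
      1 - ((1 - c₃) * (1 - c₁ * c₂) + c₃ * (1 - c₁) * (1 - c₂)) / (1 - c₁ * c₂ * c₃)
        ∈ Set.Icc (0:ℝ) 1) ∧
    Filter.Tendsto
      (fun c : ℝ => 1 - ((1 - c) * (1 - c * c) + c * (1 - c) * (1 - c)) / (1 - c * c * c))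
      (nhdsWithin 1 (Set.Iio 1)) (nhds 1) := by
  constructor
  · rintro c₁ c₂ c₃ ⟨h10, h11⟩ ⟨h20, h21⟩ ⟨h30, h31⟩ hlt
    have hD : (0:ℝ) < 1 - c₁ * c₂ * c₃ := by linarith
    have hN0 : (0:ℝ) ≤ (1 - c₃) * (1 - c₁ * c₂) + c₃ * (1 - c₁) * (1 - c₂) := by
      have : c₁ * c₂ ≤ 1 := by nlinarith
      have h4 : (0:ℝ) ≤ (1 - c₃) * (1 - c₁ * c₂) := by nlinarith
      have h5 : (0:ℝ) ≤ c₃ * (1 - c₁) * (1 - c₂) :=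
        mul_nonneg (mul_nonneg h30 (by linarith)) (by linarith)
      linarith
    have hND : (1 - c₃) * (1 - c₁ * c₂) + c₃ * (1 - c₁) * (1 - c₂) ≤ 1 - c₁ * c₂ * c₃ := by
      nlinarith [mul_nonneg (mul_nonneg h10 h20) (sub_nonneg.2 h31),
        mul_nonneg (mul_nonneg h10 h30) (sub_nonneg.2 h21),
        mul_nonneg (mul_nonneg h20 h30) (sub_nonneg.2 h11)]
    constructor
    · have : ((1 - c₃) * (1 - c₁ * c₂) + c₃ * (1 - c₁) * (1 - c₂)) / (1 - c₁ * c₂ * c₃) ≤ 1 :=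
        (div_le_one hD).2 hND
      linarith
    · have : (0:ℝ) ≤ ((1 - c₃) * (1 - c₁ * c₂) + c₃ * (1 - c₁) * (1 - c₂)) / (1 - c₁ * c₂ * c₃) :=
        div_nonneg hN0 hD.le
      linarith
  · have hg : Filter.Tendsto
        (fun c : ℝ => 1 - (1 - c) * (1 + 2 * c) / (1 + c + c ^ 2)) (nhds 1) (nhds 1) := by
      have h1 : Filter.Tendsto (fun c : ℝ => (1 - c) * (1 + 2 * c)) (nhds 1) (nhds 0) := by
        have hc : Continuous (fun c : ℝ => (1 - c) * (1 + 2 * c)) := by continuity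
        simpa using hc.tendsto 1
      have h2 : Filter.Tendsto (fun c : ℝ => 1 + c + c ^ 2) (nhds 1) (nhds 3) := by
        have hc : Continuous (fun c : ℝ => 1 + c + c ^ 2) := by continuity
        have h := hc.tendsto 1
        norm_num at h
        exact h
      have h3 := h1.div h2 (by norm_num)
      have := Filter.Tendsto.sub (tendsto_const_nhds (x := (1:ℝ))) h3
      simpa using this
    refine (hg.mono_left nhdsWithin_le_nhds).congr' ?_
    filter_upwards [self_mem_nhdsWithin] with c (hc : c < 1)
    have h1 : (1:ℝ) - c ≠ 0 := by linarith
    have h2 : (0:ℝ) < 1 + c + c ^ 2 := by nlinarith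
    have h3 : (1:ℝ) - c * c * c ≠ 0 := by
      have : (1:ℝ) - c * c * c = (1 - c) * (1 + c + c ^ 2) := by ring
      rw [this]
      positivity
    rw [sub_right_inj, div_eq_div_iff h2.ne' h3]
    ring
end

section
/- Let ω(εp₁, εp₂) = arccos(cos(εp₁)·cos(εp₂)). Then as ε → 0, ω(εp) = ε·|p| − (ε³/6)·p₁²p₂²/|p| + O(ε⁵) for p ≠ 0, where |p| = √(p₁²+p₂²). In particular ω has a conical (non-differentiable) singularity at the origin. -/
open Asymptotics Finset Real

lemma cos_bound6 {x : ℝ} (hx : |x| ≤ 1) :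
    |Real.cos x - (1 - x ^ 2 / 2 + x ^ 4 / 24)| ≤ |x| ^ 6 * (7 / 4320) := by
  have key : ∀ y : ℝ, |y| ≤ 1 → ‖Complex.exp (y * Complex.I)
      - ∑ m ∈ range 6, (y * Complex.I) ^ m / m.factorial‖ ≤ |y| ^ 6 * (7 / 4320) := by
    intro y hy
    have h := Complex.exp_bound (x := y * Complex.I) (by simpa using hy) (n := 6) (by norm_num)
    have h2 : ‖(y:ℂ) * Complex.I‖ = |y| := by simp
    rw [h2] at h
    convert h using 2
    norm_num [Nat.factorial]
  have hsum : (∑ m ∈ range 6, (x * Complex.I) ^ m / m.factorial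
      + ∑ m ∈ range 6, ((-x) * Complex.I) ^ m / m.factorial) / 2
      = 1 - (x:ℂ) ^ 2 / 2 + (x:ℂ) ^ 4 / 24 := by
    simp [sum_range_succ, Nat.factorial]
    ring_nf
    simp [Complex.I_sq]
    ring
  have hcos : Complex.cos x = (Complex.exp (x * Complex.I) + Complex.exp ((-x) * Complex.I)) / 2 := by
    rw [Complex.cos]
  have h1 : |Real.cos x - (1 - x ^ 2 / 2 + x ^ 4 / 24)|
      = ‖Complex.cos x - (1 - (x:ℂ) ^ 2 / 2 + (x:ℂ) ^ 4 / 24)‖ := by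
    rw [← Real.norm_eq_abs, ← Complex.norm_real]; simp
  rw [h1, hcos, ← hsum]
  have heq : (Complex.exp (x * Complex.I) + Complex.exp ((-x) * Complex.I)) / 2 -
      (∑ m ∈ range 6, (x * Complex.I) ^ m / m.factorial
      + ∑ m ∈ range 6, ((-x) * Complex.I) ^ m / m.factorial) / 2
      = ((Complex.exp (x * Complex.I) - ∑ m ∈ range 6, (x * Complex.I) ^ m / m.factorial)
      + (Complex.exp ((-x) * Complex.I) - ∑ m ∈ range 6, ((-x) * Complex.I) ^ m / m.factorial)) / 2 := by
    ring
  rw [heq]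
  calc ‖_‖ ≤ (‖Complex.exp (x * Complex.I) - ∑ m ∈ range 6, (x * Complex.I) ^ m / m.factorial‖
      + ‖Complex.exp ((-x) * Complex.I) - ∑ m ∈ range 6, ((-x) * Complex.I) ^ m / m.factorial‖) / 2 := by
        rw [norm_div]
        simp only [Complex.norm_two]
        gcongr
        exact norm_add_le _ _
    _ ≤ (|x| ^ 6 * (7 / 4320) + |x| ^ 6 * (7 / 4320)) / 2 := by
        gcongr
        · exact key x hx
        · have := key (-x) (by simpa using hx)
          simpa using this
    _ = |x| ^ 6 * (7 / 4320) := by ring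

lemma arccos_cos_abs {t : ℝ} (h : |t| ≤ π) : Real.arccos (Real.cos t) = |t| := by
  rcases le_or_gt 0 t with ht | ht
  · rw [abs_of_nonneg ht] at h ⊢
    exact Real.arccos_cos ht h
  · rw [abs_of_neg ht] at h ⊢
    rw [← Real.cos_neg]
    exact Real.arccos_cos (by linarith) h

lemma cosP_bigO (c : ℝ) :
    (fun ε : ℝ => Real.cos (ε * c) - (1 - (ε * c) ^ 2 / 2 + (ε * c) ^ 4 / 24))
      =O[nhdsWithin 0 (Set.Ioi 0)] fun ε : ℝ => ε ^ 6 := by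
  rw [isBigO_iff]
  refine ⟨(|c| + 1) ^ 6, ?_⟩
  have hmem : Set.Ioc (0:ℝ) (1 / (|c| + 1)) ∈ nhdsWithin (0:ℝ) (Set.Ioi 0) :=
    Ioc_mem_nhdsGT_of_mem ⟨le_refl _, by positivity⟩
  filter_upwards [hmem] with ε hε
  have hc1 : (0:ℝ) < |c| + 1 := by positivity
  have hεc : |ε * c| ≤ 1 := by
    rw [abs_mul, abs_of_pos hε.1]
    calc ε * |c| ≤ (1 / (|c| + 1)) * (|c| + 1) := by
          apply mul_le_mul hε.2 (by linarith [abs_nonneg c]) (abs_nonneg c) (by positivity)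
      _ = 1 := by field_simp
  have := cos_bound6 hεc
  have h2 : |ε * c| ^ 6 * (7 / 4320) ≤ (|c| + 1) ^ 6 * ε ^ 6 := by
    rw [abs_mul, abs_of_pos hε.1, mul_pow]
    have : |c| ^ 6 ≤ (|c| + 1) ^ 6 := by
      apply pow_le_pow_left₀ (abs_nonneg c); linarith
    nlinarith [pow_pos hε.1 6, pow_nonneg (abs_nonneg c) 6]
  calc ‖Real.cos (ε * c) - (1 - (ε * c) ^ 2 / 2 + (ε * c) ^ 4 / 24)‖
      ≤ |ε * c| ^ 6 * (7 / 4320) := this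
    _ ≤ (|c| + 1) ^ 6 * ε ^ 6 := h2
    _ = (|c| + 1) ^ 6 * ‖ε ^ 6‖ := by
        rw [Real.norm_eq_abs, abs_pow, abs_of_pos hε.1]

set_option maxHeartbeats 2000000 in
lemma expansion_core (a b r : ℝ) (hr : 0 < r) (hr2 : r ^ 2 = a ^ 2 + b ^ 2) :
    (fun ε : ℝ => Real.arccos (Real.cos (ε * a) * Real.cos (ε * b)) -
      (ε * r - ε ^ 3 / 6 * (a ^ 2 * b ^ 2 / r)))
      =O[nhdsWithin 0 (Set.Ioi 0)] fun ε : ℝ => ε ^ 5 := by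
  have hr' : r ≠ 0 := ne_of_gt hr
  set F := nhdsWithin (0:ℝ) (Set.Ioi 0) with hF
  obtain ⟨n, hn0, hn⟩ : ∃ n : ℝ, 0 ≤ n ∧ n = a ^ 2 * b ^ 2 / 6 := ⟨_, by positivity, rfl⟩
  obtain ⟨R, hR0, hRdef⟩ : ∃ R : ℝ, 0 < R ∧ R = a ^ 2 + b ^ 2 :=
    ⟨_, by rw [← hr2]; positivity, rfl⟩
  rw [← hRdef] at hr2
  obtain ⟨m, hm⟩ : ∃ m : ℝ → ℝ, m = fun ε : ℝ => ε * r - ε ^ 3 * n / r := ⟨_, rfl⟩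
  obtain ⟨m2, hm2def⟩ : ∃ m2 : ℝ → ℝ,
      m2 = fun ε : ℝ => ε ^ 2 * R - 2 * ε ^ 4 * n + ε ^ 6 * n ^ 2 / R := ⟨_, rfl⟩
  have hm2 : ∀ ε, (m ε) ^ 2 = m2 ε := by
    intro ε
    have h1 : (m ε) ^ 2 = ε ^ 2 * r ^ 2 - 2 * ε ^ 4 * n + ε ^ 6 * n ^ 2 / r ^ 2 := by
      simp only [hm]
      field_simp
      ring
    rw [h1, hr2, hm2def]
  obtain ⟨Pa, hPa⟩ : ∃ Pa : ℝ → ℝ,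
      Pa = fun ε : ℝ => 1 - (ε * a) ^ 2 / 2 + (ε * a) ^ 4 / 24 := ⟨_, rfl⟩
  obtain ⟨Pb, hPb⟩ : ∃ Pb : ℝ → ℝ,
      Pb = fun ε : ℝ => 1 - (ε * b) ^ 2 / 2 + (ε * b) ^ 4 / 24 := ⟨_, rfl⟩
  obtain ⟨T, hT⟩ : ∃ T : ℝ → ℝ,
      T = fun ε : ℝ => 1 - m2 ε / 2 + (m2 ε) ^ 2 / 24 := ⟨_, rfl⟩
  obtain ⟨W, hW⟩ : ∃ W : ℝ → ℝ, W = fun ε : ℝ =>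
      ((a ^ 2 * b ^ 8 + 5 * a ^ 4 * b ^ 6 + 5 * a ^ 6 * b ^ 4 + a ^ 8 * b ^ 2) / 144
      - ε ^ 2 * (a ^ 4 * b ^ 8 + 2 * a ^ 6 * b ^ 6 + a ^ 8 * b ^ 4) / 192
      + ε ^ 4 * (a ^ 6 * b ^ 8 + a ^ 8 * b ^ 6) / 1296
      - ε ^ 6 * (a ^ 8 * b ^ 8) / 31104) / R ^ 2 := ⟨_, rfl⟩
  have hR' : R ≠ 0 := ne_of_gt hR0
  have hab' : a ^ 2 + b ^ 2 ≠ 0 := by rw [← hRdef]; exact hR'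
  have hWid : ∀ ε, Pa ε * Pb ε - T ε = ε ^ 6 * W ε := by
    intro ε
    simp only [hPa, hPb, hT, hW, hm2def, hn, hRdef]
    field_simp
    ring
  -- the four big-O pieces
  have hA : (fun ε => (Real.cos (ε * a) - Pa ε) * Real.cos (ε * b)) =O[F] fun ε => ε ^ 6 := by
    have h2 : (fun ε : ℝ => Real.cos (ε * b)) =O[F] (fun _ : ℝ => (1:ℝ)) := by
      have hcont : Continuous fun ε : ℝ => Real.cos (ε * b) := by fun_prop
      exact ((hcont.tendsto 0).mono_left nhdsWithin_le_nhds).isBigO_one ℝ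
    rw [hPa]
    simpa using (cosP_bigO a).mul h2
  have hB : (fun ε => Pa ε * (Real.cos (ε * b) - Pb ε)) =O[F] fun ε => ε ^ 6 := by
    have h2 : (fun ε : ℝ => Pa ε) =O[F] (fun _ : ℝ => (1:ℝ)) := by
      have hcont : Continuous Pa := by rw [hPa]; fun_prop
      exact ((hcont.tendsto 0).mono_left nhdsWithin_le_nhds).isBigO_one ℝ
    rw [hPb]
    simpa using h2.mul (cosP_bigO b)
  have hC : (fun ε : ℝ => ε ^ 6 * W ε) =O[F] fun ε => ε ^ 6 := by
    have h2 : (fun ε : ℝ => W ε) =O[F] (fun _ : ℝ => (1:ℝ)) := by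
      have hcont : Continuous W := by
        rw [hW]
        exact Continuous.div_const (by fun_prop) _
      exact ((hcont.tendsto 0).mono_left nhdsWithin_le_nhds).isBigO_one ℝ
    simpa using (isBigO_refl (fun ε : ℝ => ε ^ 6) F).mul h2
  have hD : (fun ε => Real.cos (m ε) - T ε) =O[F] fun ε => ε ^ 6 := by
    rw [isBigO_iff]
    refine ⟨r ^ 6, ?_⟩
    have hδ : (0:ℝ) < min 1 (min (1 / r) (r ^ 2 / (n + 1))) :=
      lt_min one_pos (lt_min (by positivity) (div_pos (pow_pos hr 2) (by linarith)))
    filter_upwards [Ioc_mem_nhdsGT_of_mem (Set.left_mem_Ico.2 hδ)] with ε hε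
    have hε0 : 0 < ε := hε.1
    have hε1 : ε ≤ 1 := hε.2.trans (min_le_left _ _)
    have hεr : ε * r ≤ 1 := by
      have h := hε.2.trans ((min_le_right _ _).trans (min_le_left _ _))
      rw [← le_div_iff₀ hr]; exact h
    have hεn : ε * (n + 1) ≤ r ^ 2 := by
      have h := hε.2.trans ((min_le_right _ _).trans (min_le_right _ _))
      rw [le_div_iff₀ (by linarith)] at h
      exact h
    have hm_nonneg : 0 ≤ m ε := by
      simp only [hm]
      rw [sub_nonneg, div_le_iff₀ hr]
      have hmul := mul_le_mul_of_nonneg_left hεn hε0.le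
      nlinarith [hn0, hε0.le, hε1, mul_nonneg (mul_nonneg hε0.le hε0.le) hn0]
    have hm_le : m ε ≤ ε * r := by
      simp only [hm]
      have h9 : 0 ≤ ε ^ 3 * n / r := by positivity
      linarith
    have hm_abs : |m ε| ≤ 1 := by
      rw [abs_of_nonneg hm_nonneg]
      exact hm_le.trans hεr
    have hTm : T ε = 1 - (m ε) ^ 2 / 2 + (m ε) ^ 4 / 24 := by
      simp only [hT, ← hm2 ε]; ring
    have hb := cos_bound6 hm_abs
    rw [← hTm] at hb
    calc ‖Real.cos (m ε) - T ε‖ ≤ |m ε| ^ 6 * (7 / 4320) := hb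
      _ ≤ (ε * r) ^ 6 * 1 := by
          apply mul_le_mul _ (by norm_num) (by norm_num) (by positivity)
          apply pow_le_pow_left₀ (abs_nonneg _)
          rw [abs_of_nonneg hm_nonneg]; exact hm_le
      _ = r ^ 6 * ‖ε ^ 6‖ := by
          rw [Real.norm_eq_abs, abs_of_nonneg (by positivity : (0:ℝ) ≤ ε ^ 6)]; ring
  have hq : (fun ε => Real.cos (ε * a) * Real.cos (ε * b) - Real.cos (m ε))
      =O[F] fun ε => ε ^ 6 := by
    have hfun : (fun ε => Real.cos (ε * a) * Real.cos (ε * b) - Real.cos (m ε))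
        = fun ε => (Real.cos (ε * a) - Pa ε) * Real.cos (ε * b)
          + Pa ε * (Real.cos (ε * b) - Pb ε) + ε ^ 6 * W ε
          - (Real.cos (m ε) - T ε) := by
      funext ε
      rw [← hWid ε]; ring
    rw [hfun]
    exact ((hA.add hB).add hC).sub hD
  obtain ⟨c, hc⟩ := isBigO_iff.mp hq
  obtain ⟨B, hB0, hcB⟩ : ∃ B : ℝ, 0 ≤ B ∧ c ≤ B := ⟨max c 0, le_max_right _ _, le_max_left _ _⟩
  obtain ⟨C, hC0, hCdef⟩ : ∃ C : ℝ, 0 < C ∧ C = 8 * (B + 1) / r :=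
    ⟨_, by positivity, rfl⟩
  rw [isBigO_iff]
  refine ⟨C, ?_⟩
  have hδ : (0:ℝ) < min 1 (min (1 / (2 * r)) (min (r ^ 2 / (2 * n + 1))
      (min (r / (4 * C)) (2 / (C ^ 2 + 1))))) := by
    refine lt_min one_pos (lt_min (by positivity) (lt_min
      (div_pos (pow_pos hr 2) (by linarith)) (lt_min
      (div_pos hr (by linarith)) (div_pos two_pos (by nlinarith [sq_nonneg C])))))
  filter_upwards [hc, Ioc_mem_nhdsGT_of_mem (Set.left_mem_Ico.2 hδ)] with ε hc1 hε
  have hε0 : 0 < ε := hε.1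
  have hε1 : ε ≤ 1 := hε.2.trans (min_le_left _ _)
  have hεr : ε * r ≤ 1 / 2 := by
    have h := hε.2.trans ((min_le_right _ _).trans (min_le_left _ _))
    rw [le_div_iff₀ (by positivity)] at h
    linarith
  have hεn : ε * (2 * n + 1) ≤ r ^ 2 := by
    have h := hε.2.trans ((min_le_right _ _).trans ((min_le_right _ _).trans (min_le_left _ _)))
    rw [le_div_iff₀ (by linarith)] at h
    linarith
  have hεC : C * ε ≤ r / 4 := by
    have h := hε.2.trans ((min_le_right _ _).trans ((min_le_right _ _).trans
      ((min_le_right _ _).trans (min_le_left _ _))))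
    rw [le_div_iff₀ (by linarith)] at h
    nlinarith
  have hεC2 : ε * (C ^ 2 + 1) ≤ 2 := by
    have h := hε.2.trans ((min_le_right _ _).trans ((min_le_right _ _).trans
      ((min_le_right _ _).trans (min_le_right _ _))))
    rw [le_div_iff₀ (by nlinarith [sq_nonneg C])] at h
    linarith
  have hε4 : ε ^ 4 ≤ ε := by
    have h3 : ε ^ 3 ≤ 1 := pow_le_one₀ hε0.le hε1
    calc ε ^ 4 = ε ^ 3 * ε := by ring
      _ ≤ 1 * ε := mul_le_mul_of_nonneg_right h3 hε0.le
      _ = ε := one_mul ε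
  obtain ⟨θ, hθ0, hθdef⟩ : ∃ θ : ℝ, 0 < θ ∧ θ = C * ε ^ 5 :=
    ⟨_, by positivity, rfl⟩
  have hmlow : ε * r / 2 ≤ m ε := by
    have h1 : ε ^ 3 * n / r ≤ ε * r / 2 := by
      rw [div_le_iff₀ hr]
      have hmul := mul_le_mul_of_nonneg_left hεn hε0.le
      nlinarith [hn0, hε0.le, hε1, mul_nonneg (mul_nonneg hε0.le hε0.le) hn0]
    simp only [hm]
    linarith
  have hmup : m ε ≤ ε * r := by
    simp only [hm]
    have h9 : 0 ≤ ε ^ 3 * n / r := by positivity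
    linarith
  have hm0 : 0 < m ε := lt_of_lt_of_le (by positivity) hmlow
  have hm1 : m ε ≤ 1 / 2 := hmup.trans hεr
  have hθm : θ ≤ m ε / 2 := by
    have h1 : θ ≤ ε * r / 4 := by
      rw [hθdef]
      calc C * ε ^ 5 = (C * ε) * ε ^ 4 := by ring
        _ ≤ (r / 4) * ε := mul_le_mul hεC hε4 (by positivity) (by linarith)
        _ = ε * r / 4 := by ring
    linarith
  have hθ1 : θ ≤ 1 := by linarith
  have hsinm : m ε / 2 ≤ Real.sin (m ε) := by
    have h0 := Real.sin_gt_sub_cube hm0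
    have hsq : m ε * m ε ≤ 1 / 2 * (1 / 2) := mul_le_mul hm1 hm1 hm0.le (by norm_num)
    have hcb : m ε ^ 3 ≤ 1 / 4 * m ε := by nlinarith [hm0.le]
    linarith
  have hsinθ : θ / 2 ≤ Real.sin θ := by
    have h0 := Real.sin_gt_sub_cube hθ0
    have hsq : θ * θ ≤ 1 * 1 := mul_le_mul hθ1 hθ1 hθ0.le (by norm_num)
    have hcb : θ ^ 3 ≤ 1 * θ := by nlinarith [hθ0.le]
    linarith
  have hcosθ : 1 - θ ^ 2 / 2 ≤ Real.cos θ := Real.one_sub_sq_div_two_le_cos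
  obtain ⟨q, hqdef⟩ : ∃ q : ℝ, q = Real.cos (ε * a) * Real.cos (ε * b) := ⟨_, rfl⟩
  rw [← hqdef] at hc1
  have hqbound : |q - Real.cos (m ε)| ≤ B * ε ^ 6 := by
    rw [Real.norm_eq_abs, Real.norm_eq_abs,
      abs_of_nonneg (by positivity : (0:ℝ) ≤ ε ^ 6)] at hc1
    calc |q - Real.cos (m ε)| ≤ c * ε ^ 6 := hc1
      _ ≤ B * ε ^ 6 := mul_le_mul_of_nonneg_right hcB (by positivity)
  have key1 : (B + 1) * ε ^ 6 ≤ Real.sin (m ε) * Real.sin θ := by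
    have h1 : ε * r / 4 * (θ / 2) ≤ Real.sin (m ε) * Real.sin θ := by
      apply mul_le_mul _ hsinθ (by linarith)
        (Real.sin_nonneg_of_nonneg_of_le_pi hm0.le (by linarith [Real.pi_gt_three]))
      linarith
    have h2 : (B + 1) * ε ^ 6 ≤ ε * r / 4 * (θ / 2) := by
      rw [hθdef, hCdef]
      have heq9 : ε * r / 4 * (8 * (B + 1) / r * ε ^ 5 / 2) = (B + 1) * ε ^ 6 := by
        field_simp; ring
      rw [heq9]
    linarith
  have key2 : θ ^ 2 / 2 ≤ ε ^ 6 := by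
    rw [hθdef]
    have h1 : (C * ε ^ 5) ^ 2 / 2 = C ^ 2 * ε ^ 4 / 2 * ε ^ 6 := by ring
    rw [h1]
    have h2 : C ^ 2 * ε ^ 4 / 2 ≤ 1 := by
      have h3 : C ^ 2 * ε ^ 4 ≤ C ^ 2 * ε := mul_le_mul_of_nonneg_left hε4 (sq_nonneg C)
      nlinarith [mul_pos hε0 hC0, sq_nonneg C]
    nlinarith [pow_pos hε0 6]
  have hq_abs : -1 ≤ q ∧ q ≤ 1 := by
    have h9 : |q| ≤ 1 := by
      rw [hqdef, abs_mul]
      exact mul_le_one₀ (Real.abs_cos_le_one _) (abs_nonneg _) (Real.abs_cos_le_one _)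
    exact abs_le.mp h9
  have hπ : (3:ℝ) < π := Real.pi_gt_three
  have hcosup : Real.cos (m ε + θ) ≤ q := by
    rw [Real.cos_add]
    have e1 : Real.cos (m ε) * Real.cos θ ≤ Real.cos (m ε) + (1 - Real.cos θ) := by
      nlinarith [Real.neg_one_le_cos (m ε), Real.cos_le_one θ, hcosθ, hθ1]
    have e2 : Real.cos (m ε) - B * ε ^ 6 ≤ q := by
      have h9 := abs_le.mp hqbound
      linarith [h9.1]
    linarith [key1, key2]
  have hcoslow : q ≤ Real.cos (m ε - θ) := by
    rw [Real.cos_sub]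
    have e1 : Real.cos (m ε) - (1 - Real.cos θ) ≤ Real.cos (m ε) * Real.cos θ := by
      nlinarith [Real.cos_le_one (m ε), Real.cos_le_one θ, hcosθ, hθ1]
    have e2 : q ≤ Real.cos (m ε) + B * ε ^ 6 := by
      have h9 := abs_le.mp hqbound
      linarith [h9.2]
    linarith [key1, key2]
  have hUmem : m ε + θ ∈ Set.Icc 0 π := ⟨by linarith, by linarith⟩
  have hLmem : m ε - θ ∈ Set.Icc 0 π := ⟨by linarith, by linarith⟩
  have hfmem : Real.arccos q ∈ Set.Icc 0 π := ⟨Real.arccos_nonneg q, Real.arccos_le_pi q⟩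
  have hfcos : Real.cos (Real.arccos q) = q := Real.cos_arccos hq_abs.1 hq_abs.2
  have hupper : Real.arccos q ≤ m ε + θ := by
    apply (Real.strictAntiOn_cos.le_iff_ge hUmem hfmem).mp
    rw [hfcos]; exact hcosup
  have hlower : m ε - θ ≤ Real.arccos q := by
    apply (Real.strictAntiOn_cos.le_iff_ge hfmem hLmem).mp
    rw [hfcos]; exact hcoslow
  have hmeq : ε * r - ε ^ 3 / 6 * (a ^ 2 * b ^ 2 / r) = m ε := by
    simp only [hm, hn]; ring
  rw [Real.norm_eq_abs, Real.norm_eq_abs, ← hqdef, hmeq,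
    abs_of_nonneg (by positivity : (0:ℝ) ≤ ε ^ 5), abs_le]
  rw [hθdef] at hupper hlower
  constructor <;> linarith

theorem conical_expansion_2d
    (ω : EuclideanSpace ℝ (Fin 2) → ℝ)
    (hω : ∀ p, ω p = Real.arccos (Real.cos (p 0) * Real.cos (p 1))) :
    (∀ p : EuclideanSpace ℝ (Fin 2), p ≠ 0 →
      (fun ε : ℝ => ω (ε • p) -
          (ε * ‖p‖ - ε ^ 3 / 6 * ((p 0) ^ 2 * (p 1) ^ 2 / ‖p‖)))
        =O[nhdsWithin 0 (Set.Ioi 0)] fun ε : ℝ => ε ^ 5) ∧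
      ¬ DifferentiableAt ℝ ω 0 := by
  constructor
  · intro p hp
    have hr : 0 < ‖p‖ := norm_pos_iff.2 hp
    have hr2 : ‖p‖ ^ 2 = (p 0) ^ 2 + (p 1) ^ 2 := by
      rw [EuclideanSpace.norm_eq, Real.sq_sqrt (by positivity)]
      simp [Fin.sum_univ_two, sq_abs]
    have key := expansion_core (p 0) (p 1) ‖p‖ hr hr2
    have hfun : (fun ε : ℝ => ω (ε • p) -
          (ε * ‖p‖ - ε ^ 3 / 6 * ((p 0) ^ 2 * (p 1) ^ 2 / ‖p‖)))
        = fun ε : ℝ => Real.arccos (Real.cos (ε * p 0) * Real.cos (ε * p 1)) -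
          (ε * ‖p‖ - ε ^ 3 / 6 * ((p 0) ^ 2 * (p 1) ^ 2 / ‖p‖)) := by
      funext ε
      rw [hω]
      simp [PiLp.smul_apply, smul_eq_mul]
    rw [hfun]
    exact key
  · intro hdiff
    set e : EuclideanSpace ℝ (Fin 2) := EuclideanSpace.single (0 : Fin 2) (1:ℝ) with he
    have hsm : DifferentiableAt ℝ (fun t : ℝ => t • e) 0 :=
      differentiableAt_fun_id.smul_const e
    have hcomp : DifferentiableAt ℝ (fun t : ℝ => ω (t • e)) 0 := by
      have h2 : DifferentiableAt ℝ (ω ∘ fun t : ℝ => t • e) 0 :=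
        DifferentiableAt.comp 0 (by simpa using hdiff) hsm
      simpa [Function.comp_def] using h2
    have heq : (fun t : ℝ => ω (t • e)) =ᶠ[nhds (0:ℝ)] fun t => |t| := by
      have h1 : ∀ᶠ t : ℝ in nhds 0, |t| < 1 := by
        have := Metric.ball_mem_nhds (0:ℝ) one_pos
        filter_upwards [this] with t ht
        simpa [Real.dist_eq] using ht
      filter_upwards [h1] with t ht
      rw [hω]
      have h0 : (t • e) 0 = t := by simp [he, PiLp.smul_apply, EuclideanSpace.single_apply]
      have h1' : (t • e) 1 = 0 := by simp [he, PiLp.smul_apply, EuclideanSpace.single_apply]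
      rw [h0, h1', Real.cos_zero, mul_one]
      exact arccos_cos_abs (ht.le.trans (by linarith [Real.pi_gt_three]))
    have : DifferentiableAt ℝ (fun t : ℝ => |t|) 0 := by
      rwa [← Filter.EventuallyEq.differentiableAt_iff heq]
    exact not_differentiableAt_abs_zero this
end
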